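/- Let d ∈ ℕ, d ≥ 1, let p ∈ ℕ, p ≥ 1, let K ⊆ ℝ^{d+1} be open with (x_K,t_K) ∈ K, let x_K^{(1)} denote the first coordinate of x_K, and let V ∈ C^{max(p−2,0)}(K;ℝ). If q ∈ QT^p(K) satisfies q(x,t) = 0 and (∂_{x_1}q)(x,t) = 0 for every point (x,t) ∈ ℝ^{d+1} whose first spatial coordinate equals x_K^{(1)}, then q is the zero polynomial. In other words, an element of QT^p(K) is uniquely determined by its restriction and the restriction of its ∂_{x_1}-derivative to the hyperplane {x_1 = x_K^{(1)}}. -/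

import Mathlib

open scoped BigOperators
open MeasureTheory

noncomputable section

/-- Space–time points `(x, t)` with `x ∈ ℝ^d`, `t ∈ ℝ`. -/
abbrev Pt (d : ℕ) : Type := (Fin d → ℝ) × ℝ

/-- Multi-indices `j = (j_x, j_t)`. -/
abbrev MI (d : ℕ) : Type := (Fin d → ℕ) × ℕ

/-- `|j|`, the total order of a multi-index. -/
def MI.deg {d : ℕ} (j : MI d) : ℕ := (∑ ℓ, j.1 ℓ) + j.2

/-- `j!`. -/
def MI.fact {d : ℕ} (j : MI d) : ℕ := (∏ ℓ, Nat.factorial (j.1 ℓ)) * Nat.factorial j.2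

/-- componentwise difference of multi-indices. -/
def MI.sub {d : ℕ} (j z : MI d) : MI d := (fun ℓ => j.1 ℓ - z.1 ℓ, j.2 - z.2)

/-- add `k` to the spatial component `ℓ` of a multi-index. -/
def MI.addX {d : ℕ} (j : MI d) (ℓ : Fin d) (k : ℕ) : MI d :=
  (fun m => j.1 m + if m = ℓ then k else 0, j.2)

/-- spatial canonical basis vector in `ℝ^d`. -/
def eVecd (d : ℕ) (ℓ : Fin d) : Fin d → ℝ := fun m => if m = ℓ then 1 else 0

/-- spatial unit direction in space–time. -/
def eDir (d : ℕ) (ℓ : Fin d) : Pt d := (eVecd d ℓ, 0)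

/-- time unit direction in space–time. -/
def tDir (d : ℕ) : Pt d := (0, 1)

/-- directional (partial) derivative. -/
def pd {d : ℕ} (v : Pt d) (f : Pt d → ℂ) : Pt d → ℂ := fun z => fderiv ℝ f z v

/-- the multi-index partial derivative `D^j = ∂_{x_1}^{j_1} ⋯ ∂_{x_d}^{j_d} ∂_t^{j_t}`. -/
def Dmi {d : ℕ} (j : MI d) (f : Pt d → ℂ) : Pt d → ℂ :=
  (List.finRange d).foldr (fun ℓ g => (pd (eDir d ℓ))^[j.1 ℓ] g) ((pd (tDir d))^[j.2] f)

/-- the Schrödinger operator `S f = i ∂_t f + ½ Δ_x f − V f`. -/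
def Sop {d : ℕ} (V : Pt d → ℝ) (f : Pt d → ℂ) : Pt d → ℂ := fun z =>
  Complex.I * pd (tDir d) f z
    + (1 / 2) * ∑ ℓ : Fin d, pd (eDir d ℓ) (pd (eDir d ℓ) f) z
    - (V z : ℂ) * f z

/-- all multi-indices with every component `≤ p`. -/
def MIall (d p : ℕ) : Finset (MI d) :=
  (Finset.univ : Finset ((Fin d → Fin (p + 1)) × Fin (p + 1))).image
    (fun j => ((fun ℓ => (j.1 ℓ : ℕ)), (j.2 : ℕ)))

/-- multi-indices with `|j| ≤ p`. -/
def MIle (d p : ℕ) : Finset (MI d) := (MIall d p).filter (fun j => MI.deg j ≤ p)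

/-- multi-indices with `|j| < m`. -/
def MIlt (d m : ℕ) : Finset (MI d) := (MIall d m).filter (fun j => MI.deg j < m)

/-- multi-indices with `|j| = m`. -/
def MIeq (d m : ℕ) : Finset (MI d) := (MIall d m).filter (fun j => MI.deg j = m)

/-- multi-indices `z ≤ j` (componentwise). -/
def MIbelow {d : ℕ} (j : MI d) : Finset (MI d) :=
  (MIall d (MI.deg j)).filter (fun z => (∀ ℓ, z.1 ℓ ≤ j.1 ℓ) ∧ z.2 ≤ j.2)

/-- monomial of multi-index `j`, centered at `c`, scaled by `h`. -/
def monoC {d : ℕ} (c : Pt d) (h : ℝ) (j : MI d) : Pt d → ℂ := fun z =>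
  (∏ ℓ, (((z.1 ℓ - c.1 ℓ) / h : ℝ) : ℂ) ^ j.1 ℓ) * (((z.2 - c.2) / h : ℝ) : ℂ) ^ j.2

/-- `ℙ^p`: polynomial functions `ℝ^{d+1} → ℂ` of total degree `≤ p`. -/
def PolySet (d p : ℕ) : Set (Pt d → ℂ) :=
  {q | ∃ C : MI d → ℂ, ∀ z, q z = ∑ j ∈ MIle d p, C j * monoC ((0 : Fin d → ℝ), (0 : ℝ)) 1 j z}

/-- the quasi-Trefftz space `QT^p(K)` for the potential `V`, centered at `c`:
polynomials of degree `≤ p` with `D^j(Sq)(c) = 0` for all `|j| ≤ p − 2`. -/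
def QTset (d p : ℕ) (V : Pt d → ℝ) (c : Pt d) : Set (Pt d → ℂ) :=
  {q | q ∈ PolySet d p ∧ ∀ j : MI d, MI.deg j + 2 ≤ p → Dmi j (Sop V q) c = 0}

/-- Taylor polynomial of order `m` (degree `m − 1`) centered at `c`. -/
def TaylorP {d : ℕ} (m : ℕ) (c : Pt d) (φ : Pt d → ℂ) : Pt d → ℂ := fun z =>
  ∑ j ∈ MIlt d m, ((MI.fact j : ℂ))⁻¹ * Dmi j φ c * monoC c 1 j z

/-- Euclidean distance on `ℝ^{d+1} = ℝ^d × ℝ`. -/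
def eDist {d : ℕ} (z w : Pt d) : ℝ :=
  Real.sqrt ((∑ ℓ, (z.1 ℓ - w.1 ℓ) ^ 2) + (z.2 - w.2) ^ 2)

namespace QT

variable {d : ℕ}

abbrev Idx (d : ℕ) := Fin d ⊕ Unit

lemma beq_inl_inl {d : ℕ} (a b : Fin d) : ((Sum.inl a : Idx d) == Sum.inl b) = (a == b) := rfl
lemma beq_inl_inr {d : ℕ} (a : Fin d) (u : Unit) : ((Sum.inl a : Idx d) == Sum.inr u) = false := rfl
lemma beq_inr_inl {d : ℕ} (a : Fin d) (u : Unit) : ((Sum.inr u : Idx d) == Sum.inl a) = false := rfl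
lemma beq_inr_inr {d : ℕ} (u v : Unit) : ((Sum.inr u : Idx d) == Sum.inr v) = (u == v) := rfl

instance instLawfulBEqIdx (d : ℕ) : LawfulBEq (Idx d) where
  eq_of_beq {a b} h := by
    cases a <;> cases b <;>
      simp only [beq_inl_inl, beq_inl_inr, beq_inr_inl, beq_inr_inr] at h
    · rw [eq_of_beq h]
    · cases h
    · cases h
    · rw [eq_of_beq h]
  rfl {a} := by
    cases a <;> simp only [beq_inl_inl, beq_inr_inr, beq_self_eq_true]

def vec {d : ℕ} : Idx d → Pt d := Sum.elim (eDir d) (fun _ => tDir d)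

def jfun {d : ℕ} (j : MI d) : Idx d → ℕ := Sum.elim j.1 (fun _ => j.2)

def M {d : ℕ} (j : MI d) : Pt d → ℂ := monoC ((0 : Fin d → ℝ), (0 : ℝ)) 1 j

lemma M_apply (j : MI d) (z : Pt d) :
    M j z = (∏ ℓ, ((z.1 ℓ : ℝ) : ℂ) ^ j.1 ℓ) * ((z.2 : ℝ) : ℂ) ^ j.2 := by
  simp [M, monoC]

def mdec (j : MI d) (i : Idx d) : MI d :=
  (fun m => j.1 m - (if i = Sum.inl m then 1 else 0),
   j.2 - (if i = Sum.inr () then 1 else 0))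

def incr (j : MI d) : Idx d → MI d
  | Sum.inl ℓ => (fun m => j.1 m + if m = ℓ then 1 else 0, j.2)
  | Sum.inr _ => (j.1, j.2 + 1)

def pds {d : ℕ} (L : List (Pt d)) (f : Pt d → ℂ) : Pt d → ℂ := L.foldr pd f

def idxList (j : MI d) : List (Idx d) :=
  ((List.finRange d).flatMap fun ℓ => List.replicate (j.1 ℓ) (Sum.inl ℓ))
    ++ List.replicate j.2 (Sum.inr ())

def mdecL (L : List (Idx d)) (w : MI d) : MI d :=
  (fun m => w.1 m - L.count (Sum.inl m), w.2 - L.count (Sum.inr ()))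

def DFL (L : List (Idx d)) (w : MI d) : ℕ :=
  ∏ i : Idx d, Nat.descFactorial (jfun w i) (L.count i)

/-- differentiability of coordinates -/
lemma diff_coord (ℓ : Fin d) : Differentiable ℝ (fun z : Pt d => ((z.1 ℓ : ℝ) : ℂ)) := by
  exact Complex.ofRealCLM.differentiable.comp
    (((ContinuousLinearMap.proj ℓ).comp (ContinuousLinearMap.fst ℝ (Fin d → ℝ) ℝ)).differentiable)

lemma diff_t : Differentiable ℝ (fun z : Pt d => ((z.2 : ℝ) : ℂ)) := by
  exact Complex.ofRealCLM.differentiable.comp ((ContinuousLinearMap.snd ℝ (Fin d → ℝ) ℝ).differentiable)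

lemma diff_prod (j : MI d) (s : Finset (Fin d)) :
    Differentiable ℝ (fun z : Pt d => ∏ ℓ ∈ s, ((z.1 ℓ : ℝ) : ℂ) ^ j.1 ℓ) := by
  classical
  induction s using Finset.induction_on with
  | empty => simpa using differentiable_const (1 : ℂ)
  | @insert a s ha ih =>
      have := ((diff_coord (d := d) a).fun_pow (j.1 a)).fun_mul ih
      simpa [Finset.prod_insert ha] using this

lemma diff_M (j : MI d) : Differentiable ℝ (M j) := by
  have h := (diff_prod j Finset.univ).mul ((diff_t (d := d)).pow j.2)
  have : M j = fun z : Pt d => (∏ ℓ, ((z.1 ℓ : ℝ) : ℂ) ^ j.1 ℓ) * ((z.2 : ℝ) : ℂ) ^ j.2 :=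
    funext fun z => M_apply j z
  rw [this]; exact h

lemma contDiff_M (j : MI d) {n : WithTop ℕ∞} : ContDiff ℝ n (M j) := by
  classical
  have hc : ∀ ℓ : Fin d, ContDiff ℝ n (fun z : Pt d => ((z.1 ℓ : ℝ) : ℂ)) := by
    intro ℓ
    exact Complex.ofRealCLM.contDiff.comp
      (((ContinuousLinearMap.proj ℓ).comp (ContinuousLinearMap.fst ℝ (Fin d → ℝ) ℝ)).contDiff)
  have ht : ContDiff ℝ n (fun z : Pt d => ((z.2 : ℝ) : ℂ)) :=
    Complex.ofRealCLM.contDiff.comp ((ContinuousLinearMap.snd ℝ (Fin d → ℝ) ℝ).contDiff)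
  have hp : ∀ s : Finset (Fin d), ContDiff ℝ n (fun z : Pt d => ∏ ℓ ∈ s, ((z.1 ℓ : ℝ) : ℂ) ^ j.1 ℓ) := by
    intro s
    induction s using Finset.induction_on with
    | empty => simpa using contDiff_const (c := (1:ℂ))
    | @insert a s ha ih =>
        have := ((hc a).pow (j.1 a)).mul ih
        simpa [Finset.prod_insert ha] using this
  have : M j = fun z : Pt d => (∏ ℓ, ((z.1 ℓ : ℝ) : ℂ) ^ j.1 ℓ) * ((z.2 : ℝ) : ℂ) ^ j.2 :=
    funext fun z => M_apply j z
  rw [this]; exact (hp Finset.univ).mul (ht.pow j.2)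



lemma pt_add_smul_inl (z : Pt d) (s : ℝ) (ℓ m : Fin d) :
    (z + s • vec (Sum.inl ℓ)).1 m = z.1 m + (if m = ℓ then s else 0) := by
  simp only [Prod.fst_add, Prod.smul_fst, Pi.add_apply, Pi.smul_apply, vec, Sum.elim_inl,
    eDir, eVecd, smul_eq_mul]
  split <;> simp

lemma pt_add_smul_inl_snd (z : Pt d) (s : ℝ) (ℓ : Fin d) :
    (z + s • vec (Sum.inl ℓ)).2 = z.2 := by
  simp [vec, eDir]

lemma pt_add_smul_inr (z : Pt d) (s : ℝ) :
    (z + s • vec (Sum.inr () : Idx d)).1 = z.1 ∧ (z + s • vec (Sum.inr () : Idx d)).2 = z.2 + s := by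
  constructor <;> simp [vec, tDir]

lemma line_eq_inl (j : MI d) (ℓ : Fin d) (z : Pt d) :
    (fun s : ℝ => M j (z + s • vec (Sum.inl ℓ)))
      = fun s : ℝ => ((z.1 ℓ + s : ℝ) : ℂ) ^ j.1 ℓ *
          ((∏ m ∈ Finset.univ.erase ℓ, ((z.1 m : ℝ) : ℂ) ^ j.1 m) * ((z.2 : ℝ) : ℂ) ^ j.2) := by
  funext s
  rw [M_apply]
  rw [← Finset.prod_erase_mul Finset.univ _ (Finset.mem_univ ℓ)]
  have h1 : ∀ m ∈ Finset.univ.erase ℓ,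
      (((z + s • vec (Sum.inl ℓ)).1 m : ℝ) : ℂ) ^ j.1 m = ((z.1 m : ℝ) : ℂ) ^ j.1 m := by
    intro m hm
    rw [pt_add_smul_inl]
    simp [(Finset.mem_erase.mp hm).1]
  rw [Finset.prod_congr rfl h1, pt_add_smul_inl_snd, pt_add_smul_inl]
  have hs : (if ℓ = ℓ then s else (0:ℝ)) = s := if_pos rfl
  rw [hs]; ring

lemma line_eq_inr (j : MI d) (z : Pt d) :
    (fun s : ℝ => M j (z + s • vec (Sum.inr () : Idx d)))
      = fun s : ℝ => ((z.2 + s : ℝ) : ℂ) ^ j.2 * (∏ m, ((z.1 m : ℝ) : ℂ) ^ j.1 m) := by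
  funext s
  rw [M_apply, (pt_add_smul_inr z s).1, (pt_add_smul_inr z s).2]
  ring

lemma hasDerivAt_cpow_comp {c : ℝ → ℂ} {c' : ℂ} {x : ℝ} (h : HasDerivAt c c' x) (n : ℕ) :
    HasDerivAt (fun s => c s ^ n) ((n : ℂ) * c x ^ (n - 1) * c') x := by
  induction n with
  | zero => simpa using hasDerivAt_const x (1 : ℂ)
  | succ m ih =>
      have h2 : HasDerivAt (fun s => c s ^ m * c s)
          (((m : ℂ) * c x ^ (m - 1) * c') * c x + c x ^ m * c') x := ih.mul h
      have h3 : HasDerivAt (fun s => c s ^ (m + 1))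
          (((m : ℂ) * c x ^ (m - 1) * c') * c x + c x ^ m * c') x := by
        simpa [pow_succ] using h2
      convert h3 using 1
      cases m with
      | zero => simp
      | succ k =>
          push_cast
          rw [pow_succ]
          ring

lemma hasDerivAt_line (j : MI d) (i : Idx d) (z : Pt d) :
    HasDerivAt (fun s : ℝ => M j (z + s • vec i))
      ((jfun j i : ℂ) * M (mdec j i) z) 0 := by
  cases i with
  | inl ℓ =>
      rw [line_eq_inl]
      have h0 : HasDerivAt (fun s : ℝ => (z.1 ℓ + s)) 1 0 := (hasDerivAt_id 0).const_add _
      have h1 : HasDerivAt (fun s : ℝ => ((z.1 ℓ + s : ℝ) : ℂ)) 1 0 := by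
        simpa using h0.ofReal_comp
      have h2 := hasDerivAt_cpow_comp h1 (j.1 ℓ)
      have h3 := h2.mul_const
        ((∏ m ∈ Finset.univ.erase ℓ, ((z.1 m : ℝ) : ℂ) ^ j.1 m) * ((z.2 : ℝ) : ℂ) ^ j.2)
      convert h3 using 1
      · rfl
      rw [M_apply]
      rw [← Finset.prod_erase_mul Finset.univ _ (Finset.mem_univ ℓ)]
      have h4 : ∀ m ∈ Finset.univ.erase ℓ,
          ((z.1 m : ℝ) : ℂ) ^ (mdec j (Sum.inl ℓ)).1 m = ((z.1 m : ℝ) : ℂ) ^ j.1 m := by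
        intro m hm
        have hne : m ≠ ℓ := (Finset.mem_erase.mp hm).1
        have : (mdec j (Sum.inl ℓ)).1 m = j.1 m := by
          simp [mdec, hne.symm]
        rw [this]
      rw [Finset.prod_congr rfl h4]
      have h5 : (mdec j (Sum.inl ℓ)).1 ℓ = j.1 ℓ - 1 := by simp [mdec]
      have h6 : (mdec j (Sum.inl ℓ)).2 = j.2 := by simp [mdec]
      rw [h5, h6]
      simp only [jfun, Sum.elim_inl, add_zero]
      ring
  | inr u =>
      cases u
      rw [line_eq_inr]
      have h0 : HasDerivAt (fun s : ℝ => (z.2 + s)) 1 0 := (hasDerivAt_id 0).const_add _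
      have h1 : HasDerivAt (fun s : ℝ => ((z.2 + s : ℝ) : ℂ)) 1 0 := by
        simpa using h0.ofReal_comp
      have h2 := hasDerivAt_cpow_comp h1 j.2
      have h3 := h2.mul_const (∏ m, ((z.1 m : ℝ) : ℂ) ^ j.1 m)
      convert h3 using 1
      · rfl
      rw [M_apply]
      have h5 : (mdec j (Sum.inr ())).2 = j.2 - 1 := by simp [mdec]
      have h4 : (mdec j (Sum.inr ())).1 = j.1 := by
        funext m; simp [mdec]
      rw [h5, h4]
      simp only [jfun, Sum.elim_inr, add_zero]
      ring

lemma pd_vec_M (j : MI d) (i : Idx d) :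
    pd (vec i) (M j) = fun z => (jfun j i : ℂ) * M (mdec j i) z := by
  funext z
  have hγ : HasDerivAt (fun s : ℝ => z + s • vec i) (vec i) 0 := by
    simpa using ((hasDerivAt_id (0 : ℝ)).smul_const (vec (d := d) i)).const_add z
  have hF : HasFDerivAt (M j) (fderiv ℝ (M j) z) ((fun s : ℝ => z + s • vec i) 0) := by
    simpa using ((diff_M j).differentiableAt (x := z)).hasFDerivAt
  have h2 : HasDerivAt (fun s : ℝ => M j (z + s • vec i)) (fderiv ℝ (M j) z (vec i)) 0 :=
    hF.comp_hasDerivAt 0 hγ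
  have := h2.unique (hasDerivAt_line j i z)
  simpa [pd] using this



/-! ### derivative of representation sums -/

lemma pd_rep {σ : Type} (S : Finset σ) (C : σ → ℂ) (G : σ → MI d) (i : Idx d) :
    pd (vec i) (fun z => ∑ a ∈ S, C a * M (G a) z)
      = fun z => ∑ a ∈ S, C a * (jfun (G a) i : ℂ) * M (mdec (G a) i) z := by
  funext z
  have hdiff : ∀ a ∈ S, DifferentiableAt ℝ (fun z : Pt d => C a * M (G a) z) z :=
    fun a _ => ((diff_M (G a)).const_mul (C a)).differentiableAt
  show fderiv ℝ _ z (vec i) = _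
  rw [fderiv_fun_sum hdiff, ContinuousLinearMap.sum_apply]
  refine Finset.sum_congr rfl fun a _ => ?_
  rw [fderiv_const_mul ((diff_M (G a)).differentiableAt) (C a)]
  have h := congrFun (pd_vec_M (G a) i) z
  simp only [pd] at h
  simp only [ContinuousLinearMap.smul_apply, h, smul_eq_mul]
  ring

lemma jfun_mdecL (L : List (Idx d)) (w : MI d) (i : Idx d) :
    jfun (mdecL L w) i = jfun w i - L.count i := by
  cases i with
  | inl ℓ => rfl
  | inr u => cases u; rfl

lemma mdecL_nil (w : MI d) : mdecL ([] : List (Idx d)) w = w := by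
  simp [mdecL]

lemma mdecL_cons (i : Idx d) (L : List (Idx d)) (w : MI d) :
    mdecL (i :: L) w = mdec (mdecL L w) i := by
  unfold mdecL mdec
  refine Prod.ext ?_ ?_
  · funext m
    simp [List.count_cons, Nat.sub_sub, beq_iff_eq]
  · simp [List.count_cons, Nat.sub_sub, beq_iff_eq]

lemma DFL_nil (w : MI d) : DFL ([] : List (Idx d)) w = 1 := by
  simp [DFL]

lemma DFL_cons (i : Idx d) (L : List (Idx d)) (w : MI d) :
    DFL (i :: L) w = (jfun w i - L.count i) * DFL L w := by
  unfold DFL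
  rw [← Finset.prod_erase_mul Finset.univ _ (Finset.mem_univ i),
      ← Finset.prod_erase_mul Finset.univ
        (fun i' => Nat.descFactorial (jfun w i') (L.count i')) (Finset.mem_univ i)]
  have h1 : ∀ i' ∈ Finset.univ.erase i,
      Nat.descFactorial (jfun w i') ((i :: L).count i')
        = Nat.descFactorial (jfun w i') (L.count i') := by
    intro i' hi'
    have hne : i' ≠ i := (Finset.mem_erase.mp hi').1
    congr 1
    simp [List.count_cons, beq_iff_eq, Ne.symm hne]
  rw [Finset.prod_congr rfl h1]
  have h2 : (i :: L).count i = L.count i + 1 := by simp [List.count_cons]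

  rw [h2, Nat.descFactorial_succ]
  ring

lemma pds_rep {σ : Type} (S : Finset σ) (C : σ → ℂ) (G : σ → MI d) :
    ∀ L : List (Idx d),
      pds (L.map vec) (fun z => ∑ a ∈ S, C a * M (G a) z)
        = fun z => ∑ a ∈ S, C a * (DFL L (G a) : ℂ) * M (mdecL L (G a)) z := by
  intro L
  induction L with
  | nil =>
      funext z
      simp only [List.map_nil, pds, List.foldr_nil]
      refine Finset.sum_congr rfl fun a _ => ?_
      rw [DFL_nil, mdecL_nil]
      push_cast; ring
  | cons i L ih =>
      have step : pds ((i :: L).map vec) (fun z => ∑ a ∈ S, C a * M (G a) z)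
          = pd (vec i) (pds (L.map vec) (fun z => ∑ a ∈ S, C a * M (G a) z)) := rfl
      rw [step, ih]
      have := pd_rep S (fun a => C a * (DFL L (G a) : ℂ)) (fun a => mdecL L (G a)) i
      rw [this]
      funext z
      refine Finset.sum_congr rfl fun a _ => ?_
      rw [mdecL_cons, DFL_cons, jfun_mdecL]
      push_cast
      ring

/-! ### pds basics -/

lemma pds_append (L1 L2 : List (Pt d)) (f : Pt d → ℂ) :
    pds (L1 ++ L2) f = pds L1 (pds L2 f) := by
  unfold pds
  exact List.foldr_append

lemma iterate_pd_eq (v : Pt d) : ∀ (n : ℕ) (f : Pt d → ℂ),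
    (pd v)^[n] f = pds (List.replicate n v) f := by
  intro n
  induction n with
  | zero => intro f; rfl
  | succ m ih =>
      intro f
      rw [Function.iterate_succ_apply', ih]
      rfl

lemma Dmi_eq_pds (j : MI d) (f : Pt d → ℂ) :
    Dmi j f = pds ((idxList j).map vec) f := by
  have key : ∀ Lf : List (Fin d),
      Lf.foldr (fun ℓ g => (pd (eDir d ℓ))^[j.1 ℓ] g) ((pd (tDir d))^[j.2] f)
        = pds (((Lf.flatMap fun ℓ => List.replicate (j.1 ℓ) (Sum.inl ℓ : Idx d))
            ++ List.replicate j.2 (Sum.inr ())).map vec) f := by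
    intro Lf
    induction Lf with
    | nil =>
        simp only [List.foldr_nil, List.flatMap_nil, List.nil_append, List.map_replicate]
        rw [iterate_pd_eq]
        rfl
    | cons a Lf ih =>
        have h1 : (((a :: Lf).flatMap fun ℓ => List.replicate (j.1 ℓ) (Sum.inl ℓ : Idx d))
            ++ List.replicate j.2 (Sum.inr ()))
            = List.replicate (j.1 a) (Sum.inl a : Idx d)
              ++ ((Lf.flatMap fun ℓ => List.replicate (j.1 ℓ) (Sum.inl ℓ : Idx d))
                  ++ List.replicate j.2 (Sum.inr ())) := by
          rw [List.flatMap_cons, List.append_assoc]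
        rw [List.foldr_cons, ih, h1]
        simp only [List.map_append, List.map_replicate, pds_append]
        rw [iterate_pd_eq]
        rfl
  unfold Dmi idxList
  exact key (List.finRange d)

lemma count_flat (j : MI d) (i : Idx d) : ∀ Lf : List (Fin d), Lf.Nodup →
    ((Lf.flatMap fun ℓ => List.replicate (j.1 ℓ) (Sum.inl ℓ : Idx d))).count i
      = Sum.elim (fun ℓ => if ℓ ∈ Lf then j.1 ℓ else 0) (fun _ => 0) i := by
  intro Lf
  induction Lf with
  | nil => intro _; cases i <;> simp
  | cons a Lf ih =>
      intro hnd
      have hnd' := (List.nodup_cons.mp hnd).2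
      have hna := (List.nodup_cons.mp hnd).1
      rw [List.flatMap_cons, List.count_append, ih hnd', List.count_replicate]
      cases i with
      | inl ℓ =>
          by_cases hla : ℓ = a
          · subst hla
            simp [hna]
          · have : (Sum.inl a == (Sum.inl ℓ : Idx d)) = false := by
              simp [Ne.symm hla]
            simp [this, hla, List.mem_cons, Ne.symm hla]
      | inr u =>
          cases u; simp

lemma count_idxList (j : MI d) (i : Idx d) : (idxList j).count i = jfun j i := by
  unfold idxList
  rw [List.count_append, count_flat j i (List.finRange d) (List.nodup_finRange d),
    List.count_replicate]
  cases i with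
  | inl ℓ => simp [List.mem_finRange, jfun]
  | inr u => cases u; simp [jfun]

lemma length_idxList (j : MI d) : (idxList j).length = MI.deg j := by
  unfold idxList
  rw [List.length_append, List.length_flatMap, List.length_replicate]
  have : (List.map (fun ℓ => (List.replicate (j.1 ℓ) (Sum.inl ℓ : Idx d)).length)
      (List.finRange d)) = List.map (fun ℓ => j.1 ℓ) (List.finRange d) := by
    refine List.map_congr_left fun ℓ _ => ?_
    simp
  rw [this, ← List.ofFn_eq_map, List.sum_ofFn]
  rfl



/-! ### the span of monomials -/

def Span (d : ℕ) : Set (Pt d → ℂ) :=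
  {g | ∃ (σ : Type) (S : Finset σ) (C : σ → ℂ) (G : σ → MI d),
    g = fun z => ∑ a ∈ S, C a * M (G a) z}

lemma span_diff {g : Pt d → ℂ} (hg : g ∈ Span d) : Differentiable ℝ g := by
  obtain ⟨σ, S, C, G, rfl⟩ := hg
  exact Differentiable.fun_sum fun a _ => (diff_M (G a)).const_mul (C a)

lemma span_contDiff {g : Pt d → ℂ} (hg : g ∈ Span d) {n : WithTop ℕ∞} : ContDiff ℝ n g := by
  obtain ⟨σ, S, C, G, rfl⟩ := hg
  exact ContDiff.sum fun a _ => (contDiff_const).mul (contDiff_M (G a))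

lemma span_zero : (fun _ : Pt d => (0 : ℂ)) ∈ Span d :=
  ⟨MI d, ∅, 0, id, by simp⟩

lemma span_add {g₁ g₂ : Pt d → ℂ} (h₁ : g₁ ∈ Span d) (h₂ : g₂ ∈ Span d) :
    (fun z => g₁ z + g₂ z) ∈ Span d := by
  obtain ⟨σ₁, S₁, C₁, G₁, rfl⟩ := h₁
  obtain ⟨σ₂, S₂, C₂, G₂, rfl⟩ := h₂
  refine ⟨σ₁ ⊕ σ₂, S₁.disjSum S₂, Sum.elim C₁ C₂, Sum.elim G₁ G₂, ?_⟩
  funext z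
  rw [Finset.sum_disjSum]
  simp

lemma span_const_mul {g : Pt d → ℂ} (a : ℂ) (hg : g ∈ Span d) :
    (fun z => a * g z) ∈ Span d := by
  obtain ⟨σ, S, C, G, rfl⟩ := hg
  refine ⟨σ, S, fun b => a * C b, G, ?_⟩
  funext z
  rw [Finset.mul_sum]
  refine Finset.sum_congr rfl fun b _ => ?_
  ring

lemma span_finset_sum {α : Type} (s : Finset α) (F : α → Pt d → ℂ)
    (hF : ∀ x ∈ s, F x ∈ Span d) : (fun z => ∑ x ∈ s, F x z) ∈ Span d := by
  classical
  induction s using Finset.induction_on with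
  | empty => simpa using span_zero
  | @insert a s ha ih =>
      have h1 : (fun z => ∑ x ∈ insert a s, F x z)
          = fun z => F a z + ∑ x ∈ s, F x z := by
        funext z; rw [Finset.sum_insert ha]
      rw [h1]
      exact span_add (hF a (Finset.mem_insert_self a s))
        (ih fun x hx => hF x (Finset.mem_insert_of_mem hx))

lemma span_pd {g : Pt d → ℂ} (i : Idx d) (hg : g ∈ Span d) :
    pd (vec i) g ∈ Span d := by
  obtain ⟨σ, S, C, G, rfl⟩ := hg
  rw [pd_rep]
  exact ⟨σ, S, fun a => C a * (jfun (G a) i : ℂ), fun a => mdec (G a) i, rfl⟩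

lemma span_pds {g : Pt d → ℂ} (L : List (Idx d)) (hg : g ∈ Span d) :
    pds (L.map vec) g ∈ Span d := by
  induction L with
  | nil => exact hg
  | cons i L ih => exact span_pd i ih

/-- count invariance -/
lemma pds_count_inv {g : Pt d → ℂ} (hg : g ∈ Span d) {L L' : List (Idx d)}
    (h : ∀ i, L.count i = L'.count i) :
    pds (L.map vec) g = pds (L'.map vec) g := by
  obtain ⟨σ, S, C, G, rfl⟩ := hg
  rw [pds_rep, pds_rep]
  funext z
  refine Finset.sum_congr rfl fun a _ => ?_
  have h1 : DFL L (G a) = DFL L' (G a) :=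
    Finset.prod_congr rfl fun i _ => by rw [h i]
  have h2 : mdecL L (G a) = mdecL L' (G a) := by
    unfold mdecL
    refine Prod.ext ?_ ?_
    · funext m
      show (G a).1 m - L.count (Sum.inl m) = (G a).1 m - L'.count (Sum.inl m)
      rw [h (Sum.inl m)]
    · show (G a).2 - L.count (Sum.inr ()) = (G a).2 - L'.count (Sum.inr ())
      rw [h (Sum.inr ())]
  rw [h1, h2]

/-- moving a `pd` into the multi-index -/
lemma jfun_incr (j : MI d) (i i' : Idx d) :
    jfun (incr j i) i' = jfun j i' + if i' = i then 1 else 0 := by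
  cases i with
  | inl ℓ =>
      cases i' with
      | inl m => by_cases h : m = ℓ <;> simp [incr, jfun, h, Sum.inl.injEq]
      | inr u => cases u; simp [incr, jfun]
  | inr u =>
      cases u
      cases i' with
      | inl m => simp [incr, jfun]
      | inr u' => cases u'; simp [incr, jfun]

lemma Dmi_pd {g : Pt d → ℂ} (hg : g ∈ Span d) (j : MI d) (i : Idx d) :
    Dmi j (pd (vec i) g) = Dmi (incr j i) g := by
  have h1 : pd (vec i) g = pds ([i].map vec) g := rfl
  rw [h1, Dmi_eq_pds, ← pds_append, ← List.map_append, Dmi_eq_pds (incr j i)]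
  refine pds_count_inv hg fun i' => ?_
  rw [List.count_append, count_idxList, count_idxList, jfun_incr]
  congr 1
  by_cases h : i' = i
  · subst h; simp [List.count_cons]
  · simp [List.count_cons, h, beq_eq_false_iff_ne.mpr h, Ne.symm h]

/-! ### degree and factorial identities -/

lemma deg_eq_sum (j : MI d) : MI.deg j = ∑ i : Idx d, jfun j i := by
  rw [Fintype.sum_sum_type]
  simp [MI.deg, jfun]

lemma fact_eq_prod (j : MI d) : MI.fact j = ∏ i : Idx d, (jfun j i).factorial := by
  rw [Fintype.prod_sum_type]
  simp [MI.fact, jfun]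

lemma exists_lt_of_not_le (w j : MI d) (h : ¬ (∀ i, jfun j i ≤ jfun w i)) :
    ∃ i, jfun w i < jfun j i := by
  push_neg at h
  obtain ⟨i, hi⟩ := h
  exact ⟨i, hi⟩

lemma DFL_eq_zero (j w : MI d) (i : Idx d) (h : jfun w i < jfun j i) :
    DFL (idxList j) w = 0 := by
  unfold DFL
  refine Finset.prod_eq_zero (Finset.mem_univ i) ?_
  rw [count_idxList]
  exact Nat.descFactorial_eq_zero_iff_lt.mpr h

lemma DFL_self (j : MI d) : DFL (idxList j) j = MI.fact j := by
  unfold DFL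
  rw [fact_eq_prod]
  refine Finset.prod_congr rfl fun i _ => ?_
  rw [count_idxList, Nat.descFactorial_self]

lemma mdecL_self (j : MI d) : mdecL (idxList j) j = ((fun _ => 0 : Fin d → ℕ), 0) := by
  unfold mdecL
  refine Prod.ext ?_ ?_
  · funext m
    show j.1 m - (idxList j).count (Sum.inl m) = 0
    rw [count_idxList]
    exact Nat.sub_self _
  · show j.2 - (idxList j).count (Sum.inr ()) = 0
    rw [count_idxList]
    exact Nat.sub_self _

lemma M_zero_apply (z : Pt d) : M ((fun _ => 0 : Fin d → ℕ), 0) z = 1 := by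
  rw [M_apply]; simp

/-! ### hyperplane vanishing -/

lemma pd_vanish_hyper {i0 : Fin d} {a : ℝ} {f : Pt d → ℂ} (hf : Differentiable ℝ f)
    {v : Pt d} (hv : v.1 i0 = 0) (h0 : ∀ z : Pt d, z.1 i0 = a → f z = 0) :
    ∀ z : Pt d, z.1 i0 = a → pd v f z = 0 := by
  intro z hz
  have hγ : HasDerivAt (fun s : ℝ => z + s • v) v 0 := by
    simpa using ((hasDerivAt_id (0 : ℝ)).smul_const v).const_add z
  have hF : HasFDerivAt f (fderiv ℝ f z) ((fun s : ℝ => z + s • v) 0) := by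
    simpa using (hf.differentiableAt (x := z)).hasFDerivAt
  have h2 : HasDerivAt (fun s : ℝ => f (z + s • v)) (fderiv ℝ f z v) 0 :=
    hF.comp_hasDerivAt 0 hγ
  have hfun : (fun s : ℝ => f (z + s • v)) = fun _ => 0 := by
    funext s
    refine h0 _ ?_
    simp [hz, hv]
  rw [hfun] at h2
  have h3 : fderiv ℝ f z v = 0 := h2.unique (hasDerivAt_const 0 (0 : ℂ))
  simpa [pd] using h3

lemma vec_tangent {i0 : Fin d} {i : Idx d} (h : i ≠ Sum.inl i0) : (vec i).1 i0 = 0 := by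
  cases i with
  | inl ℓ =>
      have : ℓ ≠ i0 := fun he => h (by rw [he])
      simp [vec, eDir, eVecd, Ne.symm this]
  | inr u => simp [vec, tDir]

lemma tangential_chain {i0 : Fin d} {a : ℝ} :
    ∀ L : List (Idx d), (∀ i ∈ L, i ≠ Sum.inl i0) →
      ∀ g ∈ Span d, (∀ z : Pt d, z.1 i0 = a → g z = 0) →
        ∀ z : Pt d, z.1 i0 = a → pds (L.map vec) g z = 0 := by
  intro L
  induction L with
  | nil => intro _ g _ h0 z hz; exact h0 z hz
  | cons i L ih =>
      intro hL g hg h0 z hz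
      have hSpan : pds (L.map vec) g ∈ Span d := span_pds L hg
      have h1 : ∀ z : Pt d, z.1 i0 = a → pds (L.map vec) g z = 0 :=
        ih (fun i' hi' => hL i' (List.mem_cons_of_mem i hi')) g hg h0
      exact pd_vanish_hyper (span_diff hSpan)
        (vec_tangent (hL i List.mem_cons_self)) h1 z hz



/-! ### smoothness bookkeeping on the open set K -/

lemma pd_contDiffOn {K : Set (Pt d)} (hK : IsOpen K) {f : Pt d → ℂ} {n : ℕ}
    (hf : ContDiffOn ℝ ((n + 1 : ℕ) : WithTop ℕ∞) f K) (v : Pt d) :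
    ContDiffOn ℝ ((n : ℕ) : WithTop ℕ∞) (pd v f) K := by
  have h1 : ContDiffOn ℝ ((n : ℕ) : WithTop ℕ∞) (fderiv ℝ f) K := by
    refine hf.fderiv_of_isOpen hK ?_
    exact_mod_cast le_refl ((n : WithTop ℕ∞) + 1)
  have h2 := (ContinuousLinearMap.apply ℝ ℂ v).contDiff
    (𝕜 := ℝ) (n := ((n : ℕ) : WithTop ℕ∞)) |>.comp_contDiffOn h1
  exact h2

lemma pds_contDiffOn {K : Set (Pt d)} (hK : IsOpen K) :
    ∀ (L : List (Idx d)) (n : ℕ) (f : Pt d → ℂ),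
      ContDiffOn ℝ ((n + L.length : ℕ) : WithTop ℕ∞) f K →
      ContDiffOn ℝ ((n : ℕ) : WithTop ℕ∞) (pds (L.map vec) f) K := by
  intro L
  induction L with
  | nil => intro n f hf; simpa [pds] using hf
  | cons i L ih =>
      intro n f hf
      have hf' : ContDiffOn ℝ (((n + 1) + L.length : ℕ) : WithTop ℕ∞) f K := by
        have : ((n + 1) + L.length : ℕ) = (n + (i :: L).length : ℕ) := by
          simp [List.length_cons]; ring
        rw [this]; exact hf
      have h1 := ih (n + 1) f hf'
      exact pd_contDiffOn hK h1 (vec i)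

lemma diffAt_of_contDiffOn {K : Set (Pt d)} (hK : IsOpen K) {f : Pt d → ℂ} {n : ℕ}
    (hn : 1 ≤ n) (hf : ContDiffOn ℝ ((n : ℕ) : WithTop ℕ∞) f K) {z : Pt d} (hz : z ∈ K) :
    DifferentiableAt ℝ f z := by
  have h1 : DifferentiableOn ℝ f K := hf.differentiableOn (by exact_mod_cast Nat.one_le_iff_ne_zero.mp hn)
  exact h1.differentiableAt (hK.mem_nhds hz)

lemma pd_congr_on {U : Set (Pt d)} (hU : IsOpen U) {f g : Pt d → ℂ} (v : Pt d)
    (h : ∀ z ∈ U, f z = g z) : ∀ z ∈ U, pd v f z = pd v g z := by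
  intro z hz
  have he : f =ᶠ[nhds z] g := Filter.eventuallyEq_of_mem (hU.mem_nhds hz) h
  simp only [pd]
  rw [he.fderiv_eq]

/-! ### derivatives of list sums -/

lemma diffAt_list_sum {α : Type} (T : List α) (F : α → Pt d → ℂ) (z : Pt d)
    (hdiff : ∀ pr ∈ T, DifferentiableAt ℝ (F pr) z) :
    DifferentiableAt ℝ (fun w => (T.map (fun pr => F pr w)).sum) z := by
  induction T with
  | nil => simpa using differentiableAt_const (0 : ℂ)
  | cons a T ih =>
      have h1 : (fun w => ((a :: T).map (fun pr => F pr w)).sum)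
          = fun w => F a w + (T.map (fun pr => F pr w)).sum := by
        funext w; simp
      rw [h1]
      exact (hdiff a List.mem_cons_self).add
        (ih fun pr hpr => hdiff pr (List.mem_cons_of_mem a hpr))

lemma pd_list_sum {α : Type} (v : Pt d) (T : List α) (F : α → Pt d → ℂ) (z : Pt d)
    (hdiff : ∀ pr ∈ T, DifferentiableAt ℝ (F pr) z) :
    pd v (fun w => (T.map (fun pr => F pr w)).sum) z
      = (T.map (fun pr => pd v (F pr) z)).sum := by
  induction T with
  | nil =>
      simp only [List.map_nil, List.sum_nil, pd]
      rw [fderiv_fun_const]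
      simp
  | cons a T ih =>
      have h1 : (fun w => ((a :: T).map (fun pr => F pr w)).sum)
          = fun w => F a w + (T.map (fun pr => F pr w)).sum := by
        funext w; simp
      rw [h1]
      have hda := hdiff a List.mem_cons_self
      have hdT : ∀ pr ∈ T, DifferentiableAt ℝ (F pr) z :=
        fun pr hpr => hdiff pr (List.mem_cons_of_mem a hpr)
      have hds := diffAt_list_sum T F z hdT
      simp only [pd]
      rw [fderiv_fun_add hda hds]
      simp only [ContinuousLinearMap.add_apply, List.map_cons, List.sum_cons]
      congr 1
      have h2 := ih hdT
      simpa [pd] using h2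

/-! ### splitting `Dmi` over a difference on K -/

lemma pds_sub_on {K : Set (Pt d)} (hK : IsOpen K) :
    ∀ (L : List (Idx d)) (g h : Pt d → ℂ), g ∈ Span d →
      ContDiffOn ℝ ((L.length : ℕ) : WithTop ℕ∞) h K →
      ∀ z ∈ K, pds (L.map vec) (fun w => g w - h w) z
        = pds (L.map vec) g z - pds (L.map vec) h z := by
  intro L
  induction L with
  | nil => intro g h _ _ z _; rfl
  | cons i L ih =>
      intro g h hg hh z hz
      have hh' : ContDiffOn ℝ ((L.length : ℕ) : WithTop ℕ∞) h K :=
        hh.of_le (by exact_mod_cast Nat.le_succ L.length)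
      have hinner : ∀ w ∈ K, pds (L.map vec) (fun w => g w - h w) w
          = pds (L.map vec) g w - pds (L.map vec) h w := ih g h hg hh'
      have step : pds ((i :: L).map vec) (fun w => g w - h w) z
          = pd (vec i) (pds (L.map vec) (fun w => g w - h w)) z := rfl
      rw [step]
      rw [pd_congr_on hK (vec i) hinner z hz]
      have hdg : DifferentiableAt ℝ (pds (L.map vec) g) z :=
        (span_diff (span_pds L hg)).differentiableAt
      have hdh : DifferentiableAt ℝ (pds (L.map vec) h) z := by
        have h1 : ContDiffOn ℝ ((1 : ℕ) : WithTop ℕ∞) (pds (L.map vec) h) K := by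
          refine pds_contDiffOn hK L 1 h ?_
          have : ((1 + L.length : ℕ) : WithTop ℕ∞) = (((i :: L).length : ℕ) : WithTop ℕ∞) := by
            norm_cast
            simp [List.length_cons, Nat.add_comm]
          rw [this]; exact hh
        exact diffAt_of_contDiffOn hK (le_refl 1) h1 hz
      show fderiv ℝ (fun w => pds (L.map vec) g w - pds (L.map vec) h w) z (vec i) = _
      rw [fderiv_fun_sub hdg hdh]
      simp only [ContinuousLinearMap.sub_apply]
      rfl



/-! ### Leibniz expansion of `pds` of a product -/

lemma sum_map_flatMap {α β : Type} (T : List α) (f : α → List β) (h : β → ℂ) :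
    ((T.flatMap f).map h).sum = (T.map (fun a => ((f a).map h).sum)).sum := by
  induction T with
  | nil => simp
  | cons a T ih => simp [List.flatMap_cons, List.map_append, List.sum_append, ih]

lemma count_cons_le (i i' : Idx d) (L : List (Idx d)) : L.count i' ≤ (i :: L).count i' := by
  rw [List.count_cons]
  exact Nat.le_add_right _ _

lemma leibniz_expand {K : Set (Pt d)} (hK : IsOpen K) :
    ∀ (L : List (Idx d)) (n : ℕ) (W g : Pt d → ℂ), g ∈ Span d →
      ContDiffOn ℝ ((n + L.length : ℕ) : WithTop ℕ∞) W K →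
      ∃ T : List ((Pt d → ℂ) × List (Idx d)),
        (∀ pr ∈ T, ContDiffOn ℝ ((n : ℕ) : WithTop ℕ∞) pr.1 K ∧
          ∀ i, pr.2.count i ≤ L.count i) ∧
        ∀ z ∈ K, pds (L.map vec) (fun w => W w * g w) z
          = (T.map (fun pr => pr.1 z * pds (pr.2.map vec) g z)).sum := by
  intro L
  induction L with
  | nil =>
      intro n W g _ hW
      refine ⟨[(W, [])], ?_, ?_⟩
      · intro pr hpr
        have : pr = (W, ([] : List (Idx d))) := by simpa using hpr
        subst this
        refine ⟨by simpa using hW, fun i => le_refl _⟩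
      · intro z _; simp [pds]
  | cons i L ih =>
      intro n W g hg hW
      have hW' : ContDiffOn ℝ (((n + 1) + L.length : ℕ) : WithTop ℕ∞) W K := by
        have he : ((n + 1) + L.length : ℕ) = (n + (i :: L).length : ℕ) := by
          simp [List.length_cons]; ring
        rw [he]; exact hW
      obtain ⟨T, hT, heq⟩ := ih (n + 1) W g hg hW'
      refine ⟨T.flatMap (fun pr => [(pd (vec i) pr.1, pr.2), (pr.1, i :: pr.2)]), ?_, ?_⟩
      · intro pr' hpr'
        rw [List.mem_flatMap] at hpr'
        obtain ⟨pr, hpr, hmem⟩ := hpr'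
        obtain ⟨hc, hcount⟩ := hT pr hpr
        have hmem' : pr' = (pd (vec i) pr.1, pr.2) ∨ pr' = (pr.1, i :: pr.2) := by
          simpa using hmem
        rcases hmem' with h | h
        · subst h
          refine ⟨pd_contDiffOn hK hc (vec i), fun i' => ?_⟩
          exact le_trans (hcount i') (count_cons_le i i' L)
        · subst h
          refine ⟨hc.of_le (by exact_mod_cast Nat.le_succ n), fun i' => ?_⟩
          rw [List.count_cons, List.count_cons]
          exact Nat.add_le_add (hcount i') (le_refl _)
      · intro z hz
        have step : pds ((i :: L).map vec) (fun w => W w * g w) z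
            = pd (vec i) (pds (L.map vec) (fun w => W w * g w)) z := rfl
        rw [step]
        rw [pd_congr_on hK (vec i) heq z hz]
        have hdiffs : ∀ pr ∈ T, DifferentiableAt ℝ
            (fun w => pr.1 w * pds (pr.2.map vec) g w) z := by
          intro pr hpr
          obtain ⟨hc, _⟩ := hT pr hpr
          exact (diffAt_of_contDiffOn hK (Nat.le_add_left 1 n) hc hz).mul
            ((span_diff (span_pds pr.2 hg)).differentiableAt)
        rw [pd_list_sum (vec i) T _ z hdiffs]
        rw [sum_map_flatMap]
        refine congrArg List.sum (List.map_congr_left fun pr hpr => ?_)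
        obtain ⟨hc, _⟩ := hT pr hpr
        have hd1 : DifferentiableAt ℝ pr.1 z :=
          diffAt_of_contDiffOn hK (Nat.le_add_left 1 n) hc hz
        have hd2 : DifferentiableAt ℝ (pds (pr.2.map vec) g) z :=
          (span_diff (span_pds pr.2 hg)).differentiableAt
        have hprod : pd (vec i) (fun w => pr.1 w * pds (pr.2.map vec) g w) z
            = pr.1 z * pd (vec i) (pds (pr.2.map vec) g) z
              + pds (pr.2.map vec) g z * pd (vec i) pr.1 z := by
          simp only [pd]
          rw [fderiv_fun_mul hd1 hd2]
          simp [smul_eq_mul]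
        rw [hprod]
        have hcons : pd (vec i) (pds (pr.2.map vec) g) z
            = pds (((i :: pr.2)).map vec) g z := rfl
        rw [hcons]
        simp only [List.map_cons, List.map_nil, List.sum_cons, List.sum_nil]
        ring



/-! ### linearity of Dmi on the span -/

lemma Dmi_add {g₁ g₂ : Pt d → ℂ} (h₁ : g₁ ∈ Span d) (h₂ : g₂ ∈ Span d) (j : MI d) :
    Dmi j (fun z => g₁ z + g₂ z) = fun z => Dmi j g₁ z + Dmi j g₂ z := by
  obtain ⟨σ₁, S₁, C₁, G₁, rfl⟩ := h₁
  obtain ⟨σ₂, S₂, C₂, G₂, rfl⟩ := h₂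
  have hrep : (fun z => (∑ a ∈ S₁, C₁ a * M (G₁ a) z) + (∑ a ∈ S₂, C₂ a * M (G₂ a) z))
      = fun z => ∑ a ∈ S₁.disjSum S₂, Sum.elim C₁ C₂ a * M (Sum.elim G₁ G₂ a) z := by
    funext z; rw [Finset.sum_disjSum]; simp
  rw [hrep, Dmi_eq_pds, pds_rep, Dmi_eq_pds, pds_rep, Dmi_eq_pds, pds_rep]
  funext z
  rw [Finset.sum_disjSum]
  simp

lemma Dmi_const_mul (a : ℂ) {g : Pt d → ℂ} (hg : g ∈ Span d) (j : MI d) :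
    Dmi j (fun z => a * g z) = fun z => a * Dmi j g z := by
  obtain ⟨σ, S, C, G, rfl⟩ := hg
  have hrep : (fun z => a * ∑ b ∈ S, C b * M (G b) z)
      = fun z => ∑ b ∈ S, (a * C b) * M (G b) z := by
    funext z; rw [Finset.mul_sum]
    exact Finset.sum_congr rfl fun b _ => by ring
  rw [hrep, Dmi_eq_pds, pds_rep, Dmi_eq_pds, pds_rep]
  funext z
  rw [Finset.mul_sum]
  exact Finset.sum_congr rfl fun b _ => by ring

lemma Dmi_zero_fun (j : MI d) : Dmi j (fun _ : Pt d => (0 : ℂ)) = fun _ => 0 := by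
  have h0 : (fun _ : Pt d => (0 : ℂ))
      = fun z => ∑ a ∈ (∅ : Finset (MI d)), (fun _ : MI d => (0 : ℂ)) a * M (id a) z := by
    simp
  rw [h0, Dmi_eq_pds, pds_rep]
  simp

lemma Dmi_finset_sum {α : Type} (s : Finset α) (F : α → Pt d → ℂ)
    (hF : ∀ x ∈ s, F x ∈ Span d) (j : MI d) :
    Dmi j (fun z => ∑ x ∈ s, F x z) = fun z => ∑ x ∈ s, Dmi j (F x) z := by
  classical
  induction s using Finset.induction_on with
  | empty => simpa using Dmi_zero_fun j
  | @insert a s ha ih =>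
      have h1 : (fun z => ∑ x ∈ insert a s, F x z) = fun z => F a z + ∑ x ∈ s, F x z := by
        funext z; rw [Finset.sum_insert ha]
      rw [h1, Dmi_add (hF a (Finset.mem_insert_self a s))
        (span_finset_sum s F fun x hx => hF x (Finset.mem_insert_of_mem hx)) j,
        ih fun x hx => hF x (Finset.mem_insert_of_mem hx)]
      funext z
      rw [Finset.sum_insert ha]

/-! ### `pds` as `Dmi` via counts -/

def countMI (L : List (Idx d)) : MI d :=
  (fun ℓ => L.count (Sum.inl ℓ), L.count (Sum.inr ()))

lemma jfun_countMI (L : List (Idx d)) (i : Idx d) : jfun (countMI L) i = L.count i := by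
  cases i with
  | inl ℓ => rfl
  | inr u => cases u; rfl

lemma pds_eq_Dmi {g : Pt d → ℂ} (hg : g ∈ Span d) (L : List (Idx d)) :
    pds (L.map vec) g = Dmi (countMI L) g := by
  rw [Dmi_eq_pds]
  exact pds_count_inv hg fun i => by rw [count_idxList, jfun_countMI]

lemma mi_ext {w j : MI d} (h : ∀ i, jfun w i = jfun j i) : w = j :=
  Prod.ext (funext fun m => h (Sum.inl m)) (h (Sum.inr ()))

lemma fact_pos (j : MI d) : 0 < MI.fact j := by
  unfold MI.fact
  exact Nat.mul_pos (Finset.prod_pos fun ℓ _ => Nat.factorial_pos _) (Nat.factorial_pos _)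



end QT

/-- An element of `QT^p(K)` vanishing, together with its
`∂_{x_1}`-derivative, on the hyperplane `{x_1 = x_K^{(1)}}` is the zero polynomial. -/
theorem quasiTrefftz_trace_uniqueness
    (d p : ℕ) (hd : 0 < d) (hp : 1 ≤ p)
    (K : Set (Pt d)) (hK : IsOpen K) (cK : Pt d) (hcK : cK ∈ K)
    (V : Pt d → ℝ) (hV : ContDiffOn ℝ (max (p - 2) 0 : ℕ) V K)
    (q : Pt d → ℂ) (hq : q ∈ QTset d p V cK)
    (hvanish : ∀ z : Pt d, z.1 ⟨0, hd⟩ = cK.1 ⟨0, hd⟩ →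
      q z = 0 ∧ pd (eDir d ⟨0, hd⟩) q z = 0) :
    q = fun _ => (0 : ℂ) := by
  classical
  obtain ⟨⟨C, hC⟩, hQT⟩ := hq
  set i0 : Fin d := ⟨0, hd⟩ with hi0def
  have hqrep : q = fun z => ∑ w ∈ MIle d p, C w * QT.M (id w) z := by
    funext z; exact hC z
  have hqSpan : q ∈ QT.Span d := ⟨MI d, MIle d p, C, id, hqrep⟩
  have hv0 : ∀ z : Pt d, z.1 i0 = cK.1 i0 → q z = 0 := fun z hz => (hvanish z hz).1
  have hv1 : ∀ z : Pt d, z.1 i0 = cK.1 i0 → pd (QT.vec (Sum.inl i0)) q z = 0 :=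
    fun z hz => (hvanish z hz).2
  -- high order derivatives of a polynomial vanish
  have hHigh : ∀ j : MI d, p < MI.deg j → Dmi j q = fun _ => 0 := by
    intro j hj
    rw [hqrep, QT.Dmi_eq_pds, QT.pds_rep]
    funext z
    refine Finset.sum_eq_zero fun w hw => ?_
    have hdeg : MI.deg w ≤ p := (Finset.mem_filter.mp hw).2
    have hex : ∃ i, QT.jfun (id w) i < QT.jfun j i := by
      refine QT.exists_lt_of_not_le _ _ fun hcontra => ?_
      have : MI.deg j ≤ MI.deg w := by
        rw [QT.deg_eq_sum, QT.deg_eq_sum]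
        exact Finset.sum_le_sum fun i _ => hcontra i
      omega
    obtain ⟨i, hi⟩ := hex
    rw [QT.DFL_eq_zero j (id w) i hi]
    simp
  -- MAIN CLAIM : all derivatives of q at cK vanish
  have hMain : ∀ k : ℕ, ∀ j : MI d, j.1 i0 = k → Dmi j q cK = 0 := by
    intro k
    induction k using Nat.strong_induction_on with
    | _ k IH =>
    intro j hj
    rcases k with _ | _ | k
    · -- k = 0 : tangential derivatives
      have hcount0 : (QT.idxList j).count (Sum.inl i0) = 0 := by
        rw [QT.count_idxList]; exact hj
      have hnotmem : (Sum.inl i0 : QT.Idx d) ∉ QT.idxList j :=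
        List.count_eq_zero.mp hcount0
      have htang : ∀ i ∈ QT.idxList j, i ≠ Sum.inl i0 := by
        intro i hi hcon; exact hnotmem (hcon ▸ hi)
      rw [QT.Dmi_eq_pds]
      exact QT.tangential_chain (QT.idxList j) htang q hqSpan hv0 cK rfl
    · -- k = 1 : one normal derivative
      set j' : MI d := (fun m => if m = i0 then 0 else j.1 m, j.2) with hj'def
      have hcnt : ∀ i : QT.Idx d,
          (QT.idxList j).count i = (QT.idxList j' ++ [Sum.inl i0]).count i := by
        intro i
        rw [QT.count_idxList, List.count_append, QT.count_idxList]
        cases i with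
        | inl m =>
            by_cases hm : m = i0
            · have h1 : QT.jfun j (Sum.inl m) = 1 := by
                show j.1 m = 1
                rw [hm]; exact hj
              have h2 : QT.jfun j' (Sum.inl m) = 0 := by
                show j'.1 m = 0
                simp [hj'def, hm]
              have h3 : List.count (Sum.inl m : QT.Idx d) [Sum.inl i0] = 1 := by
                rw [hm]; simp [List.count_cons]
              rw [h1, h2, h3]
            · have h2 : QT.jfun j' (Sum.inl m) = QT.jfun j (Sum.inl m) := by
                show j'.1 m = j.1 m
                simp [hj'def, hm]
              have h3 : List.count (Sum.inl m : QT.Idx d) [Sum.inl i0] = 0 := by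
                have hne : (Sum.inl i0 : QT.Idx d) ≠ Sum.inl m := by
                  intro hcon
                  injection hcon with h
                  exact hm h.symm
                simp [List.count_cons, beq_eq_false_iff_ne.mpr hne]
              rw [h2, h3]
              omega
        | inr u =>
            cases u
            have h2 : QT.jfun j' (Sum.inr ()) = QT.jfun j (Sum.inr ()) := rfl
            rw [h2]
            simp [List.count_cons]
      rw [QT.Dmi_eq_pds, QT.pds_count_inv hqSpan hcnt]
      have hsplit2 : QT.pds ((QT.idxList j' ++ [Sum.inl i0]).map QT.vec) q
          = QT.pds ((QT.idxList j').map QT.vec) (pd (QT.vec (Sum.inl i0)) q) := by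
        rw [List.map_append, QT.pds_append]
        rfl
      rw [hsplit2]
      have hg' : pd (QT.vec (Sum.inl i0)) q ∈ QT.Span d := QT.span_pd _ hqSpan
      have hcount0 : (QT.idxList j').count (Sum.inl i0) = 0 := by
        rw [QT.count_idxList]; simp [QT.jfun, hj'def]
      have htang : ∀ i ∈ QT.idxList j', i ≠ Sum.inl i0 := by
        intro i hi hcon
        exact (List.count_eq_zero.mp hcount0) (hcon ▸ hi)
      exact QT.tangential_chain (QT.idxList j') htang _ hg' hv1 cK rfl
    · -- k + 2
      by_cases hdeg : MI.deg j ≤ p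
      swap
      · exact congrFun (hHigh j (by omega)) cK
      set j' : MI d := (fun m => if m = i0 then k else j.1 m, j.2) with hj'def
      have hj'i0 : j'.1 i0 = k := by simp [hj'def]
      have hdegj' : MI.deg j' + 2 = MI.deg j := by
        have h1 : ∑ m, j'.1 m + 2 = ∑ m, j.1 m := by
          rw [← Finset.add_sum_erase _ _ (Finset.mem_univ i0),
              ← Finset.add_sum_erase _ (fun m => j.1 m) (Finset.mem_univ i0)]
          have h2 : ∑ m ∈ Finset.univ.erase i0, j'.1 m
              = ∑ m ∈ Finset.univ.erase i0, j.1 m :=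
            Finset.sum_congr rfl fun m hm => by
              simp [hj'def, (Finset.mem_erase.mp hm).1]
          rw [h2, hj'i0, hj]
          ring
        have h2' : j'.2 = j.2 := rfl
        unfold MI.deg
        omega
      have hQTj' : Dmi j' (Sop V q) cK = 0 := hQT j' (by omega)
      -- the second order term in A
      set g1 : Pt d → ℂ := pd (tDir d) q with hg1def
      set g2 : Pt d → ℂ := fun z => ∑ ℓ : Fin d, pd (eDir d ℓ) (pd (eDir d ℓ) q) z with hg2def
      set A : Pt d → ℂ := fun z => Complex.I * g1 z + (1 / 2 : ℂ) * g2 z with hAdef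
      have hg1S : g1 ∈ QT.Span d := QT.span_pd (Sum.inr ()) hqSpan
      have hg2S : g2 ∈ QT.Span d :=
        QT.span_finset_sum Finset.univ _
          (fun ℓ _ => QT.span_pd (Sum.inl ℓ) (QT.span_pd (Sum.inl ℓ) hqSpan))
      have hASpan : A ∈ QT.Span d :=
        QT.span_add (QT.span_const_mul Complex.I hg1S)
          (QT.span_const_mul (1 / 2 : ℂ) hg2S)
      have hSop : Sop V q = fun z => A z - (V z : ℂ) * q z := rfl
      -- smoothness of V q on K
      have hVq : ContDiffOn ℝ (((QT.idxList j').length : ℕ) : WithTop ℕ∞)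
          (fun z => (V z : ℂ) * q z) K := by
        have hVC : ContDiffOn ℝ ((max (p - 2) 0 : ℕ) : WithTop ℕ∞)
            (fun z => (V z : ℂ)) K := Complex.ofRealCLM.contDiff.comp_contDiffOn hV
        have hq' : ContDiffOn ℝ ((max (p - 2) 0 : ℕ) : WithTop ℕ∞) q K :=
          (QT.span_contDiff hqSpan).contDiffOn
        refine (hVC.mul hq').of_le ?_
        rw [QT.length_idxList]
        exact_mod_cast (by omega : MI.deg j' ≤ max (p - 2) 0)
      have hsplit : Dmi j' (Sop V q) cK
          = Dmi j' A cK - Dmi j' (fun z => (V z : ℂ) * q z) cK := by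
        rw [hSop, QT.Dmi_eq_pds, QT.Dmi_eq_pds, QT.Dmi_eq_pds]
        exact QT.pds_sub_on hK (QT.idxList j') A _ hASpan hVq cK hcK
      -- the potential term vanishes by Leibniz and the induction hypothesis
      have hVq0 : Dmi j' (fun z => (V z : ℂ) * q z) cK = 0 := by
        have hW : ContDiffOn ℝ ((0 + (QT.idxList j').length : ℕ) : WithTop ℕ∞)
            (fun z => (V z : ℂ)) K := by
          refine (Complex.ofRealCLM.contDiff.comp_contDiffOn hV).of_le ?_
          rw [Nat.zero_add, QT.length_idxList]
          exact_mod_cast (by omega : MI.deg j' ≤ max (p - 2) 0)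
        obtain ⟨T, hT, heq⟩ :=
          QT.leibniz_expand hK (QT.idxList j') 0 (fun z => (V z : ℂ)) q hqSpan hW
        rw [QT.Dmi_eq_pds, heq cK hcK]
        refine List.sum_eq_zero fun x hx => ?_
        rw [List.mem_map] at hx
        obtain ⟨pr, hpr, rfl⟩ := hx
        have hcount := (hT pr hpr).2 (Sum.inl i0)
        rw [QT.count_idxList] at hcount
        have hk : QT.jfun j' (Sum.inl i0) = k := hj'i0
        rw [QT.pds_eq_Dmi hqSpan pr.2]
        have h0 : Dmi (QT.countMI pr.2) q cK = 0 := by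
          refine IH (pr.2.count (Sum.inl i0)) (by omega) _ ?_
          rfl
        rw [h0, mul_zero]
      -- compute the A term
      have hDA : Dmi j' A cK = Complex.I * Dmi j' g1 cK + (1 / 2 : ℂ) * Dmi j' g2 cK := by
        have h1 := congrFun (QT.Dmi_add (QT.span_const_mul Complex.I hg1S)
          (QT.span_const_mul (1 / 2 : ℂ) hg2S) j') cK
        have h2 := congrFun (QT.Dmi_const_mul Complex.I hg1S j') cK
        have h3 := congrFun (QT.Dmi_const_mul (1 / 2 : ℂ) hg2S j') cK
        rw [hAdef]
        rw [h1, h2, h3]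
      have hDt : Dmi j' g1 cK = Dmi (QT.incr j' (Sum.inr ())) q cK :=
        congrFun (QT.Dmi_pd hqSpan j' (Sum.inr ())) cK
      have hDt0 : Dmi (QT.incr j' (Sum.inr ())) q cK = 0 := by
        refine IH k (by omega) _ ?_
        show (QT.incr j' (Sum.inr ())).1 i0 = k
        simp [QT.incr, hj'i0]
      have hDg2 : Dmi j' g2 cK
          = ∑ ℓ : Fin d, Dmi j' (pd (eDir d ℓ) (pd (eDir d ℓ) q)) cK := by
        have := congrFun (QT.Dmi_finset_sum Finset.univ
          (fun ℓ => pd (eDir d ℓ) (pd (eDir d ℓ) q))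
          (fun ℓ _ => QT.span_pd (Sum.inl ℓ) (QT.span_pd (Sum.inl ℓ) hqSpan)) j') cK
        rw [hg2def]
        exact this
      have hterm : ∀ ℓ : Fin d, Dmi j' (pd (eDir d ℓ) (pd (eDir d ℓ) q)) cK
          = Dmi (QT.incr (QT.incr j' (Sum.inl ℓ)) (Sum.inl ℓ)) q cK := by
        intro ℓ
        have hpdq : pd (QT.vec (Sum.inl ℓ)) q ∈ QT.Span d := QT.span_pd _ hqSpan
        have h1 := congrFun (QT.Dmi_pd hpdq j' (Sum.inl ℓ)) cK
        have h2 := congrFun (QT.Dmi_pd hqSpan (QT.incr j' (Sum.inl ℓ)) (Sum.inl ℓ)) cK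
        exact h1.trans h2
      have hsum : ∑ ℓ : Fin d, Dmi j' (pd (eDir d ℓ) (pd (eDir d ℓ) q)) cK
          = Dmi j q cK := by
        rw [Finset.sum_congr rfl fun ℓ _ => hterm ℓ]
        rw [Finset.sum_eq_single_of_mem i0 (Finset.mem_univ i0)]
        · have hjj : QT.incr (QT.incr j' (Sum.inl i0)) (Sum.inl i0) = j := by
            refine Prod.ext ?_ ?_
            · funext m
              by_cases hm : m = i0
              · rw [hm]
                simp [QT.incr, hj'i0, hj]
              · simp [QT.incr, hj'def, hm]
            · rfl
          rw [hjj]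
        · intro ℓ _ hne
          refine IH k (by omega) _ ?_
          show (QT.incr (QT.incr j' (Sum.inl ℓ)) (Sum.inl ℓ)).1 i0 = k
          simp [QT.incr, Ne.symm hne, hj'i0]
      -- put everything together
      rw [hsplit, hVq0, sub_zero, hDA, hDt, hDt0, hDg2, hsum, mul_zero, zero_add] at hQTj'
      have h2 : Dmi j q cK = 0 := by
        have hne : (1 / 2 : ℂ) ≠ 0 := by norm_num
        exact (mul_eq_zero.mp hQTj').resolve_left hne
      exact h2
  -- coefficients vanish by downward induction on the degree
  have hCoeff : ∀ m : ℕ, ∀ w ∈ MIle d p, p - MI.deg w < m → C w = 0 := by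
    intro m
    induction m with
    | zero => intro w hw h; omega
    | succ m IHm =>
        intro w hw hlt
        have hdw : MI.deg w ≤ p := (Finset.mem_filter.mp hw).2
        have hDw : Dmi w q cK = 0 := hMain (w.1 i0) w rfl
        rw [hqrep, QT.Dmi_eq_pds, QT.pds_rep] at hDw
        simp only [id_eq] at hDw
        have hside : ∀ w' ∈ MIle d p, w' ≠ w →
            C w' * ((QT.DFL (QT.idxList w) w' : ℕ) : ℂ) * QT.M (QT.mdecL (QT.idxList w) w') cK
              = 0 := by
          intro w' hw' hne
          have hdw' : MI.deg w' ≤ p := (Finset.mem_filter.mp hw').2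
          by_cases hgt : MI.deg w < MI.deg w'
          · rw [IHm w' hw' (by omega)]
            ring
          · have hex : ∃ i, QT.jfun w' i < QT.jfun w i := by
              by_contra hcon
              push_neg at hcon
              have hle : MI.deg w ≤ MI.deg w' := by
                rw [QT.deg_eq_sum, QT.deg_eq_sum]
                exact Finset.sum_le_sum fun i _ => hcon i
              have hdeq : MI.deg w = MI.deg w' := by omega
              have hsums : ∑ i : QT.Idx d, QT.jfun w i = ∑ i : QT.Idx d, QT.jfun w' i := by
                rw [← QT.deg_eq_sum, ← QT.deg_eq_sum, hdeq]
              have hall : ∀ i ∈ (Finset.univ : Finset (QT.Idx d)),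
                  QT.jfun w i = QT.jfun w' i :=
                (Finset.sum_eq_sum_iff_of_le fun i _ => hcon i).mp hsums
              exact hne (QT.mi_ext fun i => hall i (Finset.mem_univ i)).symm
            obtain ⟨i, hi⟩ := hex
            rw [QT.DFL_eq_zero w w' i hi]
            simp
        rw [Finset.sum_eq_single_of_mem w hw hside] at hDw
        rw [QT.DFL_self, QT.mdecL_self, QT.M_zero_apply, mul_one] at hDw
        have hfact : ((MI.fact w : ℕ) : ℂ) ≠ 0 :=
          Nat.cast_ne_zero.mpr (QT.fact_pos w).ne'
        exact (mul_eq_zero.mp hDw).resolve_right hfact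
  have hC0 : ∀ w ∈ MIle d p, C w = 0 := fun w hw => hCoeff (p + 1) w hw (by omega)
  rw [hqrep]
  funext z
  exact Finset.sum_eq_zero fun w hw => by rw [hC0 w hw, zero_mul]

end
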